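/- A topological space X has the property that every open subspace of X is normal (i.e. X is hereditarily normal) if and only if for every continuous map χ : X → W′ there exists a continuous map λ : X → W with π_h ∘ λ = χ. -/

import Mathlib

/-- The four-point space `{u, c, v, p}`: `c` is an open point, `u` and `v` specialize to the
closed point `p`, and `c` specializes to `u` and `v`. -/
inductive Wp : Type
  | u | c | v | p

instance : TopologicalSpace Wp where
  IsOpen U := (Wp.p ∈ U → Wp.u ∈ U ∧ Wp.v ∈ U) ∧ (Wp.u ∈ U → Wp.c ∈ U) ∧
    (Wp.v ∈ U → Wp.c ∈ U)
  isOpen_univ := ⟨fun _ => ⟨trivial, trivial⟩, fun _ => trivial, fun _ => trivial⟩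
  isOpen_inter U W hU hW :=
    ⟨fun h => ⟨⟨(hU.1 h.1).1, (hW.1 h.2).1⟩, ⟨(hU.1 h.1).2, (hW.1 h.2).2⟩⟩,
     fun h => ⟨hU.2.1 h.1, hW.2.1 h.2⟩, fun h => ⟨hU.2.2 h.1, hW.2.2 h.2⟩⟩
  isOpen_sUnion S hS := by
    refine ⟨?_, ?_, ?_⟩
    · rintro ⟨U, hU, hmem⟩
      exact ⟨⟨U, hU, ((hS U hU).1 hmem).1⟩, ⟨U, hU, ((hS U hU).1 hmem).2⟩⟩
    · rintro ⟨U, hU, hmem⟩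
      exact ⟨U, hU, (hS U hU).2.1 hmem⟩
    · rintro ⟨U, hU, hmem⟩
      exact ⟨U, hU, (hS U hU).2.2 hmem⟩

/-- The six-point space `{u, u′, r, v′, v, p}`: `u′` and `v′` are open points, `u, r, v`
specialize to the closed point `p`, `u′` specializes to `u` and `r`, and `v′` specializes
to `v` and `r`. -/
inductive W : Type
  | u | u' | r | v' | v | p

instance : TopologicalSpace W where
  IsOpen U := (W.p ∈ U → W.u ∈ U ∧ W.r ∈ U ∧ W.v ∈ U) ∧ (W.u ∈ U → W.u' ∈ U) ∧
    (W.r ∈ U → W.u' ∈ U ∧ W.v' ∈ U) ∧ (W.v ∈ U → W.v' ∈ U)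
  isOpen_univ := ⟨fun _ => ⟨trivial, trivial, trivial⟩, fun _ => trivial,
    fun _ => ⟨trivial, trivial⟩, fun _ => trivial⟩
  isOpen_inter U T hU hT :=
    ⟨fun h => ⟨⟨(hU.1 h.1).1, (hT.1 h.2).1⟩, ⟨(hU.1 h.1).2.1, (hT.1 h.2).2.1⟩,
        ⟨(hU.1 h.1).2.2, (hT.1 h.2).2.2⟩⟩,
     fun h => ⟨hU.2.1 h.1, hT.2.1 h.2⟩,
     fun h => ⟨⟨(hU.2.2.1 h.1).1, (hT.2.2.1 h.2).1⟩, ⟨(hU.2.2.1 h.1).2, (hT.2.2.1 h.2).2⟩⟩,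
     fun h => ⟨hU.2.2.2 h.1, hT.2.2.2 h.2⟩⟩
  isOpen_sUnion S hS := by
    refine ⟨?_, ?_, ?_, ?_⟩
    · rintro ⟨U, hU, hmem⟩
      exact ⟨⟨U, hU, ((hS U hU).1 hmem).1⟩, ⟨U, hU, ((hS U hU).1 hmem).2.1⟩,
        ⟨U, hU, ((hS U hU).1 hmem).2.2⟩⟩
    · rintro ⟨U, hU, hmem⟩
      exact ⟨U, hU, (hS U hU).2.1 hmem⟩
    · rintro ⟨U, hU, hmem⟩
      exact ⟨⟨U, hU, ((hS U hU).2.2.1 hmem).1⟩, ⟨U, hU, ((hS U hU).2.2.1 hmem).2⟩⟩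
    · rintro ⟨U, hU, hmem⟩
      exact ⟨U, hU, (hS U hU).2.2.2 hmem⟩

/-- The map `π_h : W → W′` fixing `u`, `v`, `p` and collapsing `u′`, `r`, `v′` to the open
point `c`. -/
def piH : W → Wp
  | W.u => Wp.u
  | W.v => Wp.v
  | W.p => Wp.p
  | W.u' => Wp.c
  | W.r => Wp.c
  | W.v' => Wp.c

open Set

lemma isOpen_Wp_c : IsOpen ({Wp.c} : Set Wp) := by
  refine ⟨?_, ?_, ?_⟩ <;> simp

lemma isOpen_Wp_uc : IsOpen ({Wp.u, Wp.c} : Set Wp) := by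
  refine ⟨?_, ?_, ?_⟩ <;> simp

lemma isOpen_Wp_vc : IsOpen ({Wp.v, Wp.c} : Set Wp) := by
  refine ⟨?_, ?_, ?_⟩ <;> simp

lemma isOpen_Wp_ucv : IsOpen ({Wp.u, Wp.c, Wp.v} : Set Wp) := by
  refine ⟨?_, ?_, ?_⟩ <;> simp

lemma isOpen_W_u' : IsOpen ({W.u'} : Set W) := by
  refine ⟨?_, ?_, ?_, ?_⟩ <;> simp

lemma isOpen_W_v' : IsOpen ({W.v'} : Set W) := by
  refine ⟨?_, ?_, ?_, ?_⟩ <;> simp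

lemma isOpen_W_uu' : IsOpen ({W.u, W.u'} : Set W) := by
  refine ⟨?_, ?_, ?_, ?_⟩ <;> simp

lemma isOpen_W_vv' : IsOpen ({W.v, W.v'} : Set W) := by
  refine ⟨?_, ?_, ?_, ?_⟩ <;> simp

lemma isOpen_W_urv' : IsOpen ({W.u', W.r, W.v'} : Set W) := by
  refine ⟨?_, ?_, ?_, ?_⟩ <;> simp

lemma continuous_to_Wp {X : Type} [TopologicalSpace X] (f : X → Wp)
    (h1 : IsOpen (f ⁻¹' {Wp.c})) (h2 : IsOpen (f ⁻¹' {Wp.u, Wp.c}))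
    (h3 : IsOpen (f ⁻¹' {Wp.v, Wp.c})) : Continuous f := by
  rw [continuous_def]
  intro U hU
  obtain ⟨hp, hu, hv⟩ := hU
  have key : f ⁻¹' U =
      (⋃ _ : Wp.p ∈ U, Set.univ) ∪ (⋃ _ : Wp.u ∈ U, f ⁻¹' {Wp.u, Wp.c}) ∪
      (⋃ _ : Wp.v ∈ U, f ⁻¹' {Wp.v, Wp.c}) ∪ (⋃ _ : Wp.c ∈ U, f ⁻¹' {Wp.c}) := by
    ext x
    cases h : f x <;> simp [h] <;> tauto
  rw [key]
  exact (((isOpen_iUnion fun _ => isOpen_univ).union (isOpen_iUnion fun _ => h2)).union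
    (isOpen_iUnion fun _ => h3)).union (isOpen_iUnion fun _ => h1)

lemma continuous_to_W {X : Type} [TopologicalSpace X] (f : X → W)
    (h1 : IsOpen (f ⁻¹' {W.u'})) (h2 : IsOpen (f ⁻¹' {W.v'}))
    (h3 : IsOpen (f ⁻¹' {W.u, W.u'})) (h4 : IsOpen (f ⁻¹' {W.v, W.v'}))
    (h5 : IsOpen (f ⁻¹' {W.u', W.r, W.v'})) : Continuous f := by
  rw [continuous_def]
  intro U hU
  obtain ⟨hp, hu, hr, hv⟩ := hU
  have key : f ⁻¹' U =
      (⋃ _ : W.p ∈ U, Set.univ) ∪ (⋃ _ : W.u ∈ U, f ⁻¹' {W.u, W.u'}) ∪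
      (⋃ _ : W.v ∈ U, f ⁻¹' {W.v, W.v'}) ∪ (⋃ _ : W.r ∈ U, f ⁻¹' {W.u', W.r, W.v'}) ∪
      (⋃ _ : W.u' ∈ U, f ⁻¹' {W.u'}) ∪ (⋃ _ : W.v' ∈ U, f ⁻¹' {W.v'}) := by
    ext x
    cases h : f x <;> simp [h] <;> tauto
  rw [key]
  exact (((((isOpen_iUnion fun _ => isOpen_univ).union (isOpen_iUnion fun _ => h3)).union
    (isOpen_iUnion fun _ => h4)).union (isOpen_iUnion fun _ => h5)).union
    (isOpen_iUnion fun _ => h1)).union (isOpen_iUnion fun _ => h2)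

lemma W_eq_u {w : W} (h : piH w = Wp.u) : w = W.u := by
  cases w <;> first | rfl | exact absurd h (by simp [piH])

lemma W_eq_v {w : W} (h : piH w = Wp.v) : w = W.v := by
  cases w <;> first | rfl | exact absurd h (by simp [piH])

lemma Wp_eq_c {w : Wp} (h1 : w ≠ Wp.u) (h2 : w ≠ Wp.v) (h3 : w ≠ Wp.p) : w = Wp.c := by
  cases w <;> simp_all

/-- every open subspace of `X` is normal (i.e. `X` is hereditarily normal)
iff every continuous `χ : X → W′` lifts through `π_h : W → W′`. -/
theorem hereditarilyNormal_iff_lifts (X : Type) [TopologicalSpace X] :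
    (∀ O : Set X, IsOpen O → NormalSpace ↥O) ↔
      ∀ χ : X → Wp, Continuous χ →
        ∃ lam : X → W, Continuous lam ∧ piH ∘ lam = χ := by
  classical
  constructor
  · intro hnorm χ hχ
    set O : Set X := χ ⁻¹' {Wp.u, Wp.c, Wp.v} with hO_def
    have hO : IsOpen O := isOpen_Wp_ucv.preimage hχ
    haveI := hnorm O hO
    set A' : Set ↥O := Subtype.val ⁻¹' (χ ⁻¹' {Wp.u}) with hA'
    set B' : Set ↥O := Subtype.val ⁻¹' (χ ⁻¹' {Wp.v}) with hB'
    have hA'c : IsClosed A' := by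
      rw [← isOpen_compl_iff]
      have he : A'ᶜ = (Subtype.val : ↥O → X) ⁻¹' (χ ⁻¹' {Wp.v, Wp.c}) := by
        ext ⟨x, hx⟩
        have hx' : χ x ∈ ({Wp.u, Wp.c, Wp.v} : Set Wp) := hx
        simp only [hA', mem_compl_iff, mem_preimage, mem_singleton_iff, mem_insert_iff]
        cases h : χ x <;> simp_all
      rw [he]
      exact (isOpen_Wp_vc.preimage hχ).preimage continuous_subtype_val
    have hB'c : IsClosed B' := by
      rw [← isOpen_compl_iff]
      have he : B'ᶜ = (Subtype.val : ↥O → X) ⁻¹' (χ ⁻¹' {Wp.u, Wp.c}) := by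
        ext ⟨x, hx⟩
        have hx' : χ x ∈ ({Wp.u, Wp.c, Wp.v} : Set Wp) := hx
        simp only [hB', mem_compl_iff, mem_preimage, mem_singleton_iff, mem_insert_iff]
        cases h : χ x <;> simp_all
      rw [he]
      exact (isOpen_Wp_uc.preimage hχ).preimage continuous_subtype_val
    have hdisj : Disjoint A' B' := by
      rw [Set.disjoint_left]
      rintro ⟨x, hx⟩ ha hb
      simp only [hA', hB', Set.mem_preimage, Set.mem_singleton_iff] at ha hb
      rw [ha] at hb; exact Wp.noConfusion hb
    obtain ⟨U', V', hU'o, hV'o, hAU, hBV, hUV⟩ := NormalSpace.normal A' B' hA'c hB'c hdisj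
    set U : Set X := Subtype.val '' U' with hU_def
    set V : Set X := Subtype.val '' V' with hV_def
    have hUo : IsOpen U := hO.isOpenMap_subtype_val U' hU'o
    have hVo : IsOpen V := hO.isOpenMap_subtype_val V' hV'o
    have hUO : U ⊆ O := by rintro x ⟨⟨y, hy⟩, _, rfl⟩; exact hy
    have hVO : V ⊆ O := by rintro x ⟨⟨y, hy⟩, _, rfl⟩; exact hy
    have hAU2 : ∀ x, χ x = Wp.u → x ∈ U := by
      intro x hx
      have hxO : x ∈ O := by simp [hO_def, hx]
      exact ⟨⟨x, hxO⟩, hAU hx, rfl⟩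
    have hBV2 : ∀ x, χ x = Wp.v → x ∈ V := by
      intro x hx
      have hxO : x ∈ O := by simp [hO_def, hx]
      exact ⟨⟨x, hxO⟩, hBV hx, rfl⟩
    have hUVd : ∀ x, x ∈ U → x ∈ V → False := by
      rintro x ⟨a, haU, rfl⟩ ⟨b, hbV, hba⟩
      have : b = a := Subtype.ext hba
      subst this
      exact Set.disjoint_left.mp hUV haU hbV
    set lam : X → W := fun x => match χ x with
      | Wp.u => W.u
      | Wp.v => W.v
      | Wp.p => W.p
      | Wp.c => if x ∈ U then W.u' else if x ∈ V then W.v' else W.r with hlam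
    have P1 : lam ⁻¹' {W.u'} = χ ⁻¹' {Wp.c} ∩ U := by
      ext x
      simp only [hlam, mem_preimage, mem_singleton_iff, mem_inter_iff]
      cases h : χ x <;> simp [h]
      split_ifs <;> simp_all
    have P2 : lam ⁻¹' {W.v'} = χ ⁻¹' {Wp.c} ∩ V := by
      ext x
      simp only [hlam, mem_preimage, mem_singleton_iff, mem_inter_iff]
      cases h : χ x <;> simp [h]
      split_ifs <;> simp_all
    have P3 : lam ⁻¹' {W.u, W.u'} = U := by
      ext x
      simp only [hlam, mem_preimage, mem_insert_iff, mem_singleton_iff]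
      cases h : χ x <;> simp [h]
      · exact hAU2 x h
      · split_ifs with hu hv <;> simp [hu]
      · intro hu
        exact hUVd x hu (hBV2 x h)
      · intro hu
        have := hUO hu
        simp [hO_def, h] at this
    have P4 : lam ⁻¹' {W.v, W.v'} = V := by
      ext x
      simp only [hlam, mem_preimage, mem_insert_iff, mem_singleton_iff]
      cases h : χ x <;> simp [h]
      · intro hv
        exact hUVd x (hAU2 x h) hv
      · split_ifs with hu hv
        · simpa using fun hv => hUVd x hu hv
        · simp [hv]
        · simp [hv]
      · exact hBV2 x h
      · intro hv
        have := hVO hv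
        simp [hO_def, h] at this
    have P5 : lam ⁻¹' {W.u', W.r, W.v'} = χ ⁻¹' {Wp.c} := by
      ext x
      simp only [hlam, mem_preimage, mem_insert_iff, mem_singleton_iff]
      cases h : χ x <;> simp [h]
      split_ifs <;> simp <;> assumption
    refine ⟨lam, ?_, ?_⟩
    · refine continuous_to_W lam ?_ ?_ ?_ ?_ ?_
      · rw [P1]; exact (isOpen_Wp_c.preimage hχ).inter hUo
      · rw [P2]; exact (isOpen_Wp_c.preimage hχ).inter hVo
      · rw [P3]; exact hUo
      · rw [P4]; exact hVo
      · rw [P5]; exact isOpen_Wp_c.preimage hχ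
    · funext x
      simp only [hlam, Function.comp_apply]
      cases h : χ x <;> simp [h, piH]
      split_ifs <;> simp [piH]
  · intro hlift O hO
    refine ⟨fun s t hs ht hst => ?_⟩
    obtain ⟨Cs, hCs, hCs'⟩ := isClosed_induced_iff.mp hs
    obtain ⟨Ct, hCt, hCt'⟩ := isClosed_induced_iff.mp ht
    have hABd : ∀ x, x ∈ O → x ∈ Cs → x ∈ Ct → False := by
      intro x hxO hxs hxt
      have h1 : (⟨x, hxO⟩ : ↥O) ∈ s := by rw [← hCs']; exact hxs
      have h2 : (⟨x, hxO⟩ : ↥O) ∈ t := by rw [← hCt']; exact hxt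
      exact Set.disjoint_left.mp hst h1 h2
    set χ : X → Wp := fun x =>
      if x ∈ Cs ∧ x ∈ O then Wp.u else if x ∈ Ct ∧ x ∈ O then Wp.v
      else if x ∈ O then Wp.c else Wp.p with hχdef
    have Q1 : χ ⁻¹' {Wp.c} = O ∩ Csᶜ ∩ Ctᶜ := by
      ext x
      simp only [hχdef, mem_preimage, mem_singleton_iff, mem_inter_iff, mem_compl_iff]
      split_ifs with h1 h2 h3
      · exact iff_of_false (by simp) (fun h => h.1.2 h1.1)
      · exact iff_of_false (by simp) (fun h => h.2 h2.1)
      · exact iff_of_true rfl ⟨⟨h3, fun hc => h1 ⟨hc, h3⟩⟩, fun hc => h2 ⟨hc, h3⟩⟩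
      · exact iff_of_false (by simp) (fun h => h3 h.1.1)
    have Q2 : χ ⁻¹' {Wp.u, Wp.c} = O ∩ Ctᶜ := by
      ext x
      simp only [hχdef, mem_preimage, mem_insert_iff, mem_singleton_iff, mem_inter_iff,
        mem_compl_iff]
      split_ifs with h1 h2 h3
      · exact iff_of_true (Or.inl rfl) ⟨h1.2, fun hc => hABd x h1.2 h1.1 hc⟩
      · exact iff_of_false (by simp) (fun h => h.2 h2.1)
      · exact iff_of_true (Or.inr rfl) ⟨h3, fun hc => h2 ⟨hc, h3⟩⟩
      · exact iff_of_false (by simp) (fun h => h3 h.1)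
    have Q3 : χ ⁻¹' {Wp.v, Wp.c} = O ∩ Csᶜ := by
      ext x
      simp only [hχdef, mem_preimage, mem_insert_iff, mem_singleton_iff, mem_inter_iff,
        mem_compl_iff]
      split_ifs with h1 h2 h3
      · exact iff_of_false (by simp) (fun h => h.2 h1.1)
      · exact iff_of_true (Or.inl rfl) ⟨h2.2, fun hc => h1 ⟨hc, h2.2⟩⟩
      · exact iff_of_true (Or.inr rfl) ⟨h3, fun hc => h1 ⟨hc, h3⟩⟩
      · exact iff_of_false (by simp) (fun h => h3 h.1)
    have hχ : Continuous χ := by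
      refine continuous_to_Wp χ ?_ ?_ ?_
      · rw [Q1]; exact (hO.inter hCs.isOpen_compl).inter hCt.isOpen_compl
      · rw [Q2]; exact hO.inter hCt.isOpen_compl
      · rw [Q3]; exact hO.inter hCs.isOpen_compl
    obtain ⟨lam, hlamc, hcomp⟩ := hlift χ hχ
    refine ⟨Subtype.val ⁻¹' (lam ⁻¹' {W.u, W.u'}), Subtype.val ⁻¹' (lam ⁻¹' {W.v, W.v'}),
      ((isOpen_W_uu'.preimage hlamc).preimage continuous_subtype_val),
      ((isOpen_W_vv'.preimage hlamc).preimage continuous_subtype_val), ?_, ?_, ?_⟩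
    · rintro ⟨x, hxO⟩ hxs
      have hxC : x ∈ Cs := by rw [← hCs'] at hxs; exact hxs
      have hχx : χ x = Wp.u := by simp [hχdef, hxC, hxO]
      have : piH (lam x) = Wp.u := by
        have := congrFun hcomp x
        simpa using this.trans hχx
      simp [mem_preimage, W_eq_u this]
    · rintro ⟨x, hxO⟩ hxt
      have hxC : x ∈ Ct := by rw [← hCt'] at hxt; exact hxt
      have hxC' : x ∉ Cs := fun h => hABd x hxO h hxC
      have hχx : χ x = Wp.v := by simp [hχdef, hxC, hxO, hxC']
      have : piH (lam x) = Wp.v := by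
        have := congrFun hcomp x
        simpa using this.trans hχx
      simp [mem_preimage, W_eq_v this]
    · rw [Set.disjoint_left]
      rintro ⟨x, hxO⟩ h1 h2
      simp only [mem_preimage, mem_insert_iff, mem_singleton_iff] at h1 h2
      rcases h1 with h1 | h1 <;> rcases h2 with h2 | h2 <;> rw [h1] at h2 <;>
        exact W.noConfusion h2
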